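/- arXiv:2101.06722 — 3 statements merged into one kernel-verified Lean document; each statement's English description precedes it below -/
import Mathlib

section
/- Let P be a good-path between columns g_i and g_j in the x-type graph G_x(G) of an HG-matrix G, and suppose {g_i, g_j} is not a pair-type edge. Then neither the pair-partner of g_i nor the pair-partner of g_j lies on P. -/
/-- A good-path in the `x`-type graph `G_x(G)` of an HG-matrix `G` (columns indexed by
`Fin (2^s)`, pairs being the columns `2t` and `2t+1`, i.e. columns with equal `·/2`).
It is a simple path `g_{s_0} − ⋯ − g_{s_{len−1}}` on the columns, whose edges carry
alternating types (`true` = `x`-type edge `{g, g+x}`, `false` = pair-type edge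
`{g_{2t}, g_{2t+1}}`), with both the first and the last edge of `x`-type. -/
structure GoodPath (s : ℕ) (G : Fin (2 ^ s) → Fin s → ZMod 2)
    (x : Fin s → ZMod 2) where
  /-- number of vertices on the path -/
  len : ℕ
  two_le : 2 ≤ len
  /-- the column indices `s_0, …, s_{len-1}` of the vertices along the path -/
  idx : ℕ → Fin (2 ^ s)
  /-- the path is simple -/
  inj : ∀ ⦃j k⦄, j < len → k < len → idx j = idx k → j = k
  /-- the type of each edge: `true` for `x`-type, `false` for pair-type -/
  ty : ℕ → Bool
  /-- edge types alternate along the path -/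
  alt : ∀ j, j + 2 < len → ty (j + 1) = !ty j
  /-- the first edge is an `x`-type edge -/
  first : ty 0 = true
  /-- the last edge is an `x`-type edge -/
  last : ty (len - 2) = true
  /-- an `x`-type edge joins `g` to `g + x` -/
  xedge : ∀ j, j + 1 < len → ty j = true → G (idx (j + 1)) = G (idx j) + x
  /-- a pair-type edge joins the two distinct columns `2t` and `2t+1` -/
  pedge : ∀ j, j + 1 < len → ty j = false →
    (idx j).val / 2 = (idx (j + 1)).val / 2 ∧ idx j ≠ idx (j + 1)

/-- The pair-partner of a column index: `2t ↦ 2t+1` and `2t+1 ↦ 2t`. -/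
def pairPartner (r : ℕ) : ℕ := if r % 2 = 0 then r + 1 else r - 1


lemma pp_spec (a b : ℕ) (h : a / 2 = b / 2) (hne : a ≠ b) : b = pairPartner a := by
  unfold pairPartner; split <;> omega

lemma pp_div (a : ℕ) : pairPartner a / 2 = a / 2 := by
  unfold pairPartner; split <;> omega

lemma pp_ne (a : ℕ) : pairPartner a ≠ a := by
  unfold pairPartner; split <;> omega

lemma pp_invol (a : ℕ) : pairPartner (pairPartner a) = a := by
  unfold pairPartner; split <;> split <;> omega

lemma goodPath_helper (s : ℕ) (G : Fin (2 ^ s) → Fin s → ZMod 2)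
    (x : Fin s → ZMod 2) (P : GoodPath s G x) (m t : ℕ)
    (hm : m < P.len) (ht : t < P.len) (hm0 : m ≠ 0) (hm1 : m ≠ P.len - 1)
    (heq : (P.idx m).val = pairPartner (P.idx t).val) :
    ∃ e, e + 1 < P.len ∧ P.ty e = false ∧ (e = t ∨ e + 1 = t) := by
  obtain ⟨k, rfl⟩ : ∃ k, m = k + 1 := ⟨m - 1, by omega⟩
  have hL := P.two_le
  have hk1 : k + 1 + 1 < P.len := by omega
  have halt := P.alt k (by omega)
  cases hk : P.ty k with
  | false =>
    obtain ⟨hdiv, hne⟩ := P.pedge k (by omega) hk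
    have : (P.idx k).val = pairPartner (P.idx (k+1)).val := by
      have := pp_spec (P.idx (k+1)).val (P.idx k).val hdiv.symm
        (fun h => hne (Fin.ext h.symm))
      exact this
    rw [heq, pp_invol] at this
    have hkt : k = t := P.inj (by omega) ht (Fin.ext this)
    exact ⟨k, by omega, hk, Or.inl hkt⟩
  | true =>
    have hk1f : P.ty (k+1) = false := by rw [halt, hk]; rfl
    obtain ⟨hdiv, hne⟩ := P.pedge (k+1) hk1 hk1f
    have : (P.idx (k+1+1)).val = pairPartner (P.idx (k+1)).val :=
      pp_spec (P.idx (k+1)).val (P.idx (k+1+1)).val hdiv (fun h => hne (Fin.ext h))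
    rw [heq, pp_invol] at this
    have hkt : k + 1 + 1 = t := P.inj hk1 ht (Fin.ext this)
    exact ⟨k+1, hk1, hk1f, Or.inr hkt⟩

/-- If `P` is a good-path between columns `g_i = g_{s_0}` and `g_j = g_{s_{len-1}}`
of an HG-matrix and `g_i, g_j` are not a pair, then neither the pair-partner of `g_i`
nor the pair-partner of `g_j` lies on `P`. -/
theorem goodPath_partners_not_on_path (s : ℕ) (G : Fin (2 ^ s) → Fin s → ZMod 2)
    (hG : Function.Bijective G) (x : Fin s → ZMod 2) (P : GoodPath s G x)
    (hnp : (P.idx 0).val / 2 ≠ (P.idx (P.len - 1)).val / 2) :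
    ∀ m < P.len, (P.idx m).val ≠ pairPartner (P.idx 0).val ∧
      (P.idx m).val ≠ pairPartner (P.idx (P.len - 1)).val := by
  intro m hm
  have hL := P.two_le
  have htl : P.len - 1 < P.len := by omega
  constructor
  · intro heq
    have hm0 : m ≠ 0 := by
      rintro rfl
      exact pp_ne (P.idx 0).val heq.symm
    have hm1 : m ≠ P.len - 1 := by
      rintro rfl
      apply hnp
      rw [← pp_div (P.idx 0).val, ← heq]
    obtain ⟨e, he, hef, het⟩ := goodPath_helper s G x P m 0 hm (by omega) hm0 hm1 heq
    have : e = 0 := by omega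
    rw [this, P.first] at hef
    exact Bool.noConfusion hef
  · intro heq
    have hm1 : m ≠ P.len - 1 := by
      rintro rfl
      exact pp_ne (P.idx (P.len - 1)).val heq.symm
    have hm0 : m ≠ 0 := by
      rintro rfl
      apply hnp
      rw [heq, pp_div]
    obtain ⟨e, he, hef, het⟩ := goodPath_helper s G x P m (P.len - 1) hm htl hm0 hm1 heq
    have : e = P.len - 2 := by omega
    rw [this, P.last] at hef
    exact Bool.noConfusion hef
end

section
/- Let G be an HG-matrix and P a good-path g_{s_0}−⋯−g_{s_{ℓ−1}} in G_x(G). Adding x to every column g_{s_m}, m ∈ [ℓ], yields again an HG-matrix; moreover this operation equals swapping the columns g_{s_{2t}} and g_{s_{2t+1}} for all t ∈ [ℓ/2]. -/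
open Classical in
/-- Adding `x` to every column lying on a good-path of the `x`-type graph of an
HG-matrix yields again an HG-matrix (the column map is still a bijection onto `F_2^s`);
moreover this operation equals swapping the columns `g_{s_{2t}}` and `g_{s_{2t+1}}`
for all `t ∈ [ℓ/2]`. -/
theorem reorder_goodPath_HG (s : ℕ) (G : Fin (2 ^ s) → Fin s → ZMod 2)
    (hG : Function.Bijective G) (x : Fin s → ZMod 2) (P : GoodPath s G x)
    (G' : Fin (2 ^ s) → Fin s → ZMod 2)
    (hG' : ∀ c, G' c = if ∃ m, m < P.len ∧ P.idx m = c then G c + x else G c) :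
    Function.Bijective G' ∧
    ∀ t, 2 * t + 1 < P.len →
      G' (P.idx (2 * t)) = G (P.idx (2 * t + 1)) ∧
      G' (P.idx (2 * t + 1)) = G (P.idx (2 * t)) := by

  have hx2 : ∀ v : Fin s → ZMod 2, v + x + x = v := by
    intro v; funext i
    simp [add_assoc, CharTwo.add_self_eq_zero]
  have hty : ∀ j, j + 1 < P.len → (P.ty j = true ↔ j % 2 = 0) := by
    intro j
    induction j with
    | zero => simp [P.first]
    | succ n ih =>
      intro hj
      rw [P.alt n (by omega)]
      have h := ih (by omega)
      by_cases hn2 : n % 2 = 0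
      · have hn : P.ty n = true := h.mpr hn2
        simp [hn]; omega
      · have hn : P.ty n = false := by
          cases hnn : P.ty n
          · rfl
          · exact absurd (h.mp hnn) hn2
        simp [hn]; omega
  have hlen_even : P.len % 2 = 0 := by
    have h2 := P.two_le
    have h := (hty (P.len - 2) (by omega)).mp P.last
    omega
  have hswap : ∀ t, 2 * t + 1 < P.len →
      G (P.idx (2 * t + 1)) = G (P.idx (2 * t)) + x := by
    intro t ht
    exact P.xedge (2 * t) ht ((hty (2 * t) ht).mpr (by omega))
  have hpartner : ∀ m, m < P.len → ∃ m', m' < P.len ∧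
      G (P.idx m) + x = G (P.idx m') := by
    intro m hm
    by_cases he : m % 2 = 0
    · have hm1 : m + 1 < P.len := by omega
      refine ⟨m + 1, hm1, ?_⟩
      rw [P.xedge m hm1 ((hty m hm1).mpr he)]
    · refine ⟨m - 1, by omega, ?_⟩
      have h1 : m - 1 + 1 = m := by omega
      have hx := P.xedge (m - 1) (by omega)
        ((hty (m - 1) (by omega)).mpr (by omega))
      rw [h1] at hx
      rw [hx, hx2]
  have hinj : Function.Injective G' := by
    intro a b hab
    rw [hG' a, hG' b] at hab
    by_cases ha : ∃ m, m < P.len ∧ P.idx m = a <;>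
      by_cases hb : ∃ m, m < P.len ∧ P.idx m = b
    · rw [if_pos ha, if_pos hb] at hab
      have : G a + x + x = G b + x + x := by rw [hab]
      rw [hx2, hx2] at this
      exact hG.1 this
    · rw [if_pos ha, if_neg hb] at hab
      obtain ⟨m, hm, hma⟩ := ha
      obtain ⟨m', hm', heq⟩ := hpartner m hm
      rw [← hma, heq] at hab
      exact absurd ⟨m', hm', hG.1 hab⟩ hb
    · rw [if_neg ha, if_pos hb] at hab
      obtain ⟨m, hm, hmb⟩ := hb
      obtain ⟨m', hm', heq⟩ := hpartner m hm
      rw [← hmb, heq] at hab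
      exact absurd ⟨m', hm', hG.1 hab.symm⟩ ha
    · rw [if_neg ha, if_neg hb] at hab
      exact hG.1 hab
  constructor
  · exact (Fintype.bijective_iff_injective_and_card G').mpr
      ⟨hinj, by simp [ZMod.card]⟩
  · intro t ht
    constructor
    · rw [hG' (P.idx (2 * t)), if_pos ⟨2 * t, by omega, rfl⟩, ← hswap t ht]
    · rw [hG' (P.idx (2 * t + 1)), if_pos ⟨2 * t + 1, ht, rfl⟩, hswap t ht, hx2]
end

section
/- Let G be an HG-matrix, x ∈ F_2^s, and let P be a good-path in G_x(G) between columns g_{r1} and g_{r2} that are not a pair, with r1 ∈ {2i, 2i+1} and r2 ∈ {2j, 2j+1}, i ≠ j. Let G′ be obtained by adding x to every column on P. Then g′_{2p} + g′_{2p+1} = g_{2p} + g_{2p+1} + x for p ∈ {i, j}, and g′_{2p} + g′_{2p+1} = g_{2p} + g_{2p+1} for all p ∉ {i, j}. -/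
namespace GoodPath

variable {s : ℕ} {G : Fin (2 ^ s) → Fin s → ZMod 2} {x : Fin s → ZMod 2}
  (P : GoodPath s G x)

lemma ty_iff : ∀ k, k + 2 ≤ P.len → (P.ty k = true ↔ k % 2 = 0) := by
  intro k
  induction k with
  | zero => intro _; simp [P.first]
  | succ n ih =>
    intro h
    have h' : n + 2 < P.len := by omega
    have hih := ih (by omega)
    rw [P.alt n h']
    rcases Bool.eq_false_or_eq_true (P.ty n) with h0 | h0 <;>
      simp [h0] at hih ⊢ <;> omega

lemma len_even : P.len % 2 = 0 := by
  have h2 := P.two_le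
  have h := (P.ty_iff (P.len - 2) (by omega)).mp P.last
  omega

lemma internal_partner (m : ℕ) (hm0 : 0 < m) (hm1 : m < P.len - 1) :
    ∃ m', m' < P.len ∧ 0 < m' ∧ m' < P.len - 1 ∧
      (P.idx m').val / 2 = (P.idx m).val / 2 ∧ P.idx m' ≠ P.idx m := by
  have hlen := P.two_le
  have heven := P.len_even
  rcases Nat.mod_two_eq_zero_or_one m with hpar | hpar
  · -- m even, use the pair edge at m-1
    have hty : P.ty (m - 1) = false := by
      have := P.ty_iff (m - 1) (by omega)
      rcases Bool.eq_false_or_eq_true (P.ty (m - 1)) with h0 | h0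
      · exact absurd (this.mp h0) (by omega)
      · exact h0
    have hpe := P.pedge (m - 1) (by omega) hty
    have hrw : m - 1 + 1 = m := by omega
    rw [hrw] at hpe
    exact ⟨m - 1, by omega, by omega, by omega, hpe.1, hpe.2⟩
  · -- m odd, use the pair edge at m
    have hty : P.ty m = false := by
      have := P.ty_iff m (by omega)
      rcases Bool.eq_false_or_eq_true (P.ty m) with h0 | h0
      · exact absurd (this.mp h0) (by omega)
      · exact h0
    have hpe := P.pedge m (by omega) hty
    exact ⟨m + 1, by omega, by omega, by omega, hpe.1.symm, hpe.2.symm⟩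

end GoodPath

open Classical in
/-- Let `P` be a good-path in `G_x(G)` between columns `g_{r1}` and `g_{r2}` that are
not a pair, with `r1 ∈ {2i, 2i+1}` and `r2 ∈ {2j, 2j+1}`, `i ≠ j`.  Let `G'` be
obtained from the HG-matrix `G` by adding `x` to every column on `P`.  Then
`g'_{2p} + g'_{2p+1} = g_{2p} + g_{2p+1} + x` for `p ∈ {i, j}`, while
`g'_{2p} + g'_{2p+1} = g_{2p} + g_{2p+1}` for all `p ∉ {i, j}`. -/
theorem reorder_goodPath_pair_sums (s : ℕ) (G : Fin (2 ^ s) → Fin s → ZMod 2)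
    (hG : Function.Bijective G) (x : Fin s → ZMod 2) (P : GoodPath s G x)
    (i j : ℕ) (hij : i ≠ j)
    (h1 : (P.idx 0).val = 2 * i ∨ (P.idx 0).val = 2 * i + 1)
    (h2 : (P.idx (P.len - 1)).val = 2 * j ∨ (P.idx (P.len - 1)).val = 2 * j + 1)
    (G' : Fin (2 ^ s) → Fin s → ZMod 2)
    (hG' : ∀ c, G' c = if ∃ m, m < P.len ∧ P.idx m = c then G c + x else G c) :
    ∀ p (hp : 2 * p + 1 < 2 ^ s),
      ((p = i ∨ p = j) →
        G' ⟨2 * p, Nat.lt_of_le_of_lt (Nat.le_succ _) hp⟩ + G' ⟨2 * p + 1, hp⟩ =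
          G ⟨2 * p, Nat.lt_of_le_of_lt (Nat.le_succ _) hp⟩ + G ⟨2 * p + 1, hp⟩ + x) ∧
      (p ≠ i → p ≠ j →
        G' ⟨2 * p, Nat.lt_of_le_of_lt (Nat.le_succ _) hp⟩ + G' ⟨2 * p + 1, hp⟩ =
          G ⟨2 * p, Nat.lt_of_le_of_lt (Nat.le_succ _) hp⟩ + G ⟨2 * p + 1, hp⟩) := by
  
  classical
  have hlen := P.two_le
  have hi0 : (P.idx 0).val / 2 = i := by rcases h1 with h | h <;> omega
  have hj0 : (P.idx (P.len - 1)).val / 2 = j := by rcases h2 with h | h <;> omega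
  -- a non-endpoint column on the path has its pair-partner on the path
  have key : ∀ c c' : Fin (2 ^ s), c'.val / 2 = c.val / 2 → c.val ≠ c'.val →
      c.val / 2 ≠ i → c.val / 2 ≠ j →
      (∃ m, m < P.len ∧ P.idx m = c) → ∃ m', m' < P.len ∧ P.idx m' = c' := by
    rintro c c' hdiv hne hi hj ⟨m, hm, rfl⟩
    have hm0 : m ≠ 0 := by rintro rfl; exact hi hi0
    have hm1 : m ≠ P.len - 1 := by rintro rfl; exact hj hj0
    obtain ⟨m', hlt, hgt0, hlt1, hdiv', hne'⟩ :=
      P.internal_partner m (by omega) (by omega)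
    have hvne : (P.idx m').val ≠ (P.idx m).val := fun h => hne' (Fin.ext h)
    exact ⟨m', hlt, Fin.ext (by omega)⟩
  -- the partner of an endpoint column is NOT on the path
  have notOn : ∀ e o : ℕ, (e = 0 ∧ o = P.len - 1 ∨ e = P.len - 1 ∧ o = 0) →
      ∀ c' : Fin (2 ^ s), c' ≠ P.idx e → c'.val / 2 = (P.idx e).val / 2 →
      (P.idx e).val / 2 ≠ (P.idx o).val / 2 →
      ¬ ∃ m, m < P.len ∧ P.idx m = c' := by
    rintro e o hcase c' hne hdiv hdiff ⟨m, hm, rfl⟩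
    have hme : m ≠ e := by rintro rfl; exact hne rfl
    have hmo : m ≠ o := by rintro rfl; exact hdiff hdiv.symm
    have hvne : (P.idx m).val ≠ (P.idx e).val := fun h => hne (Fin.ext h)
    rcases hcase with ⟨rfl, rfl⟩ | ⟨rfl, rfl⟩
    · obtain ⟨m', hlt, hgt0, hlt1, hdiv', hne'⟩ :=
        P.internal_partner m (by omega) (by omega)
      have hvne' : (P.idx m').val ≠ (P.idx m).val := fun h => hne' (Fin.ext h)
      have : P.idx m' = P.idx 0 := Fin.ext (by omega)
      have := P.inj hlt (by omega) this
      omega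
    · obtain ⟨m', hlt, hgt0, hlt1, hdiv', hne'⟩ :=
        P.internal_partner m (by omega) (by omega)
      have hvne' : (P.idx m').val ≠ (P.idx m).val := fun h => hne' (Fin.ext h)
      have : P.idx m' = P.idx (P.len - 1) := Fin.ext (by omega)
      have := P.inj hlt (by omega) this
      omega
  intro p hp
  have hx0 : x + x = 0 := funext fun t => CharTwo.add_self_eq_zero (x t)
  set a : Fin (2 ^ s) := ⟨2 * p, Nat.lt_of_le_of_lt (Nat.le_succ _) hp⟩ with ha
  set b : Fin (2 ^ s) := ⟨2 * p + 1, hp⟩ with hb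
  have hav : a.val = 2 * p := rfl
  have hbv : b.val = 2 * p + 1 := rfl
  constructor
  · intro hpij
    have hone : (∃ m, m < P.len ∧ P.idx m = a) ∧ ¬(∃ m, m < P.len ∧ P.idx m = b)
        ∨ (∃ m, m < P.len ∧ P.idx m = b) ∧ ¬(∃ m, m < P.len ∧ P.idx m = a) := by
      rcases hpij with rfl | rfl
      · rcases h1 with hv | hv
        · exact Or.inl ⟨⟨0, by omega, Fin.ext (by omega)⟩,
            notOn 0 (P.len - 1) (Or.inl ⟨rfl, rfl⟩) b
              (fun h => by have := congrArg Fin.val h; omega) (by omega) (by omega)⟩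
        · exact Or.inr ⟨⟨0, by omega, Fin.ext (by omega)⟩,
            notOn 0 (P.len - 1) (Or.inl ⟨rfl, rfl⟩) a
              (fun h => by have := congrArg Fin.val h; omega) (by omega) (by omega)⟩
      · rcases h2 with hv | hv
        · exact Or.inl ⟨⟨P.len - 1, by omega, Fin.ext (by omega)⟩,
            notOn (P.len - 1) 0 (Or.inr ⟨rfl, rfl⟩) b
              (fun h => by have := congrArg Fin.val h; omega) (by omega) (by omega)⟩
        · exact Or.inr ⟨⟨P.len - 1, by omega, Fin.ext (by omega)⟩,
            notOn (P.len - 1) 0 (Or.inr ⟨rfl, rfl⟩) a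
              (fun h => by have := congrArg Fin.val h; omega) (by omega) (by omega)⟩
    rw [hG' a, hG' b]
    rcases hone with ⟨hA, hB⟩ | ⟨hB, hA⟩
    · rw [if_pos hA, if_neg hB]; abel
    · rw [if_neg hA, if_pos hB]; abel
  · intro hpi hpj
    rw [hG' a, hG' b]
    by_cases hA : ∃ m, m < P.len ∧ P.idx m = a
    · have hB : ∃ m, m < P.len ∧ P.idx m = b :=
        key a b (by omega) (by omega) (by omega) (by omega) hA
      rw [if_pos hA, if_pos hB]
      calc G a + x + (G b + x) = G a + G b + (x + x) := by abel
        _ = G a + G b := by rw [hx0, add_zero]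
    · by_cases hB : ∃ m, m < P.len ∧ P.idx m = b
      · exact absurd (key b a (by omega) (by omega) (by omega) (by omega) hB) hA
      · rw [if_neg hA, if_neg hB]
end
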